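/- arXiv:1909.03432 — 7 statements merged into one kernel-verified Lean document; each statement's English description precedes it below -/
import Mathlib

section
/- Let n ≥ 1 and f : (Fin n → Bool) → Bool be fully sensitive (flipping any single coordinate flips the output) and valid (for every x there exists i with f x = x i). Then f x equals the XOR of all coordinates of x, for every x. -/
instance : Std.Commutative xor := ⟨Bool.xor_comm⟩
instance : Std.Associative xor := ⟨Bool.xor_assoc⟩

lemma fold_xor_update (n : ℕ) (x : Fin n → Bool) (i : Fin n) (b : Bool) :
    Finset.univ.fold xor false (Function.update x i b)
      = xor (xor b (x i)) (Finset.univ.fold xor false x) := by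
  have hi : i ∉ Finset.univ.erase i := Finset.notMem_erase i _
  have h1 : (Finset.univ : Finset (Fin n)) = insert i (Finset.univ.erase i) := by
    rw [Finset.insert_erase (Finset.mem_univ i)]
  have hcongr : (Finset.univ.erase i).fold xor false (Function.update x i b)
      = (Finset.univ.erase i).fold xor false x := by
    apply Finset.fold_congr
    intro j hj
    exact Function.update_of_ne (Finset.ne_of_mem_erase hj) _ _
  rw [h1, Finset.fold_insert hi, Finset.fold_insert hi, hcongr,
    Function.update_self]
  cases b <;> cases x i <;> simp

lemma fold_xor_false (n : ℕ) :
    Finset.univ.fold xor false (fun _ : Fin n => false) = false := by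
  induction (Finset.univ : Finset (Fin n)) using Finset.induction with
  | empty => simp
  | insert _ _ h ih => rw [Finset.fold_insert h, ih]; simp

theorem fully_sensitive_valid_eq_xor (n : ℕ) (hn : 1 ≤ n)
    (f : (Fin n → Bool) → Bool)
    (hsens : ∀ (x : Fin n → Bool) (i : Fin n),
      f (Function.update x i true) ≠ f (Function.update x i false))
    (hvalid : ∀ x : Fin n → Bool, ∃ i : Fin n, f x = x i) :
    ∀ x : Fin n → Bool, f x = Finset.univ.fold xor false x := by
  have hflip : ∀ (x : Fin n → Bool) (i : Fin n),
      f (Function.update x i (!(x i))) = ! (f x) := by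
    intro x i
    have h := hsens x i
    cases hxi : x i with
    | false =>
      have hx : Function.update x i false = x := by
        rw [← hxi, Function.update_eq_self]
      rw [hx] at h
      rw [Bool.not_false]
      exact (Bool.eq_not_iff.mpr h)
    | true =>
      have hx : Function.update x i true = x := by
        rw [← hxi, Function.update_eq_self]
      rw [hx] at h
      rw [Bool.not_true]
      exact (Bool.eq_not_iff.mpr (Ne.symm h))
  have key : ∀ (k : ℕ) (x : Fin n → Bool),
      (Finset.univ.filter (fun j => x j = true)).card = k →
      f x = Finset.univ.fold xor false x := by
    intro k
    induction k with
    | zero =>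
      intro x hx
      have hall : ∀ j, x j = false := by
        intro j
        by_contra hj
        have hjt : x j = true := by
          cases h' : x j
          · exact absurd h' hj
          · rfl
        have : j ∈ Finset.univ.filter (fun j => x j = true) := by
          simp [hjt]
        rw [Finset.card_eq_zero.mp hx] at this
        exact absurd this (Finset.notMem_empty j)
      have hxe : x = fun _ => false := funext hall
      subst hxe
      rw [fold_xor_false]
      obtain ⟨i, hi⟩ := hvalid (fun _ => false)
      exact hi
    | succ k ih =>
      intro x hx
      have hne : (Finset.univ.filter (fun j => x j = true)).Nonempty := by
        rw [← Finset.card_pos, hx]; omega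
      obtain ⟨i, hi⟩ := hne
      have hxi : x i = true := (Finset.mem_filter.mp hi).2
      set y := Function.update x i false with hy
      have hyi : y i = false := Function.update_self i false x
      have hcard : (Finset.univ.filter (fun j => y j = true)).card = k := by
        have heq : Finset.univ.filter (fun j => y j = true)
            = (Finset.univ.filter (fun j => x j = true)).erase i := by
          ext j
          simp only [Finset.mem_filter, Finset.mem_erase, Finset.mem_univ, true_and]
          constructor
          · intro hj
            have hji : j ≠ i := by
              intro h; subst h; rw [hyi] at hj; exact Bool.false_ne_true hj
            exact ⟨hji, by rwa [hy, Function.update_of_ne hji] at hj⟩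
          · rintro ⟨hji, hj⟩
            rw [hy, Function.update_of_ne hji]; exact hj
        rw [heq, Finset.card_erase_of_mem hi, hx]
        omega
      have hfy := ih y hcard
      have hxy : x = Function.update y i true := by
        funext j
        by_cases hji : j = i
        · subst hji; rw [Function.update_self, hxi]
        · rw [Function.update_of_ne hji, hy, Function.update_of_ne hji]
      calc f x = f (Function.update y i (!(y i))) := by
            rw [hyi, Bool.not_false, ← hxy]
        _ = ! (f y) := hflip y i
        _ = ! (Finset.univ.fold xor false y) := by rw [hfy]
        _ = Finset.univ.fold xor false x := by
            conv_rhs => rw [hxy, fold_xor_update]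
            rw [hyi]
            cases Finset.univ.fold xor false y <;> rfl
  intro x
  exact key _ x rfl
end

section
/- For even n ≥ 2, there is no function f : (Fin n → Bool) → Bool that is both fully sensitive (flipping any single coordinate flips the output) and valid (for every x there exists i with f x = x i). -/
theorem no_fully_sensitive_valid_even (n : ℕ) (hn : 2 ≤ n) (heven : Even n) :
    ¬ ∃ f : (Fin n → Bool) → Bool,
      (∀ (x : Fin n → Bool) (i : Fin n),
        f (Function.update x i true) ≠ f (Function.update x i false)) ∧
      (∀ x : Fin n → Bool, ∃ i : Fin n, f x = x i) := by
  rintro ⟨f, hs, hv⟩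
  set x : ℕ → (Fin n → Bool) := fun k i => decide ((i : ℕ) < k) with hx
  have key : ∀ k, k ≤ n → f (x k) = xor (decide (k % 2 = 1)) (f (x 0)) := by
    intro k hk
    induction k with
    | zero => simp
    | succ m ih =>
      have hm : m < n := Nat.lt_of_succ_le hk
      have step : f (x (m + 1)) = ! f (x m) := by
        have h := hs (x m) ⟨m, hm⟩
        have e1 : Function.update (x m) ⟨m, hm⟩ true = x (m + 1) := by
          funext j
          rcases eq_or_ne j ⟨m, hm⟩ with h' | h'
          · subst h'; simp [hx]
          · have : (j : ℕ) ≠ m := fun hc => h' (Fin.ext hc)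
            simp [Function.update_of_ne h', hx]
            omega
        have e2 : Function.update (x m) ⟨m, hm⟩ false = x m := by
          funext j
          rcases eq_or_ne j ⟨m, hm⟩ with h' | h'
          · subst h'; simp [hx]
          · simp [Function.update_of_ne h']
        rw [e1, e2] at h
        cases hfm : f (x m) <;> cases hfm1 : f (x (m + 1)) <;>
          simp_all
      rw [step, ih (le_of_lt hm)]
      rcases Nat.even_or_odd m with he | ho
      · have h1 : m % 2 = 0 := Nat.even_iff.mp he
        have h2 : (m + 1) % 2 = 1 := by omega
        simp [h1, h2]
      · have h1 : m % 2 = 1 := Nat.odd_iff.mp ho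
        have h2 : (m + 1) % 2 = 0 := by omega
        simp [h1, h2]
  have h0 : f (x 0) = false := by
    obtain ⟨i, hi⟩ := hv (x 0)
    simpa [hx] using hi
  have hn' : f (x n) = true := by
    obtain ⟨i, hi⟩ := hv (x n)
    simpa [hx, i.isLt] using hi
  have := key n le_rfl
  rw [h0, hn', Nat.even_iff.mp heven] at this
  simp at this
end

section
/- Let n ≥ 1, r ≥ 1, and f : (Fin n → Fin r) → Fin r. Suppose f is 'coordinatewise bijective': for every coordinate i and every x, the map b ↦ f (Function.update x i b) is a bijection of Fin r. Suppose also f is valid: for every x there exists i with f x = x i. Then for every value v : Fin r and every index j, f applied to the vector that is v at coordinate j and 0 everywhere else equals v. -/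
theorem single_value_decides (n r : ℕ) (hn : 1 ≤ n) (hr : 1 ≤ r) [NeZero r]
    (f : (Fin n → Fin r) → Fin r)
    (hbij : ∀ (i : Fin n) (x : Fin n → Fin r),
      Function.Bijective (fun b : Fin r => f (Function.update x i b)))
    (hvalid : ∀ x : Fin n → Fin r, ∃ i : Fin n, f x = x i) :
    ∀ (v : Fin r) (j : Fin n), f (fun k => if k = j then v else 0) = v := by
  intro v j
  set c0 : Fin n → Fin r := fun _ => (0 : Fin r) with hc0
  have hx : (fun k => if k = j then v else 0) = Function.update c0 j v := by
    funext k
    simp [Function.update_apply, hc0]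
  have hf0 : f c0 = 0 := by
    obtain ⟨i, hi⟩ := hvalid c0
    simpa [hc0] using hi
  rw [hx]
  obtain ⟨i, hi⟩ := hvalid (Function.update c0 j v)
  by_cases h : i = j
  · subst h; simpa using hi
  · have hxi : Function.update c0 j v i = 0 := by
      simp [Function.update_apply, h, hc0]
    have h0 : f (Function.update c0 j v) = 0 := by rw [hi, hxi]
    have hinj := (hbij j c0).injective
    have : v = 0 := by
      apply hinj
      simp only [h0]
      have : Function.update c0 j (0 : Fin r) = c0 := by
        funext k; simp [Function.update_apply, hc0]
      rw [this, hf0]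
    rw [h0, this]
end

section
/- Let n ≥ 2 and r ≥ 3. There is no function f : (Fin n → Fin r) → Fin r that is both coordinatewise bijective (for every coordinate i and every x, b ↦ f (Function.update x i b) is a bijection of Fin r) and valid (for every x there exists i with f x = x i). -/
theorem no_multivalued_consensus (n r : ℕ) (hn : 2 ≤ n) (hr : 3 ≤ r) [NeZero r] :
    ¬ ∃ f : (Fin n → Fin r) → Fin r,
      (∀ (i : Fin n) (x : Fin n → Fin r),
        Function.Bijective (fun b : Fin r => f (Function.update x i b))) ∧
      (∀ x : Fin n → Fin r, ∃ i : Fin n, f x = x i) := by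
  rintro ⟨f, hbij, hval⟩
  -- base configuration: all zeros
  have hb0 : f (0 : Fin n → Fin r) = 0 := by
    obtain ⟨i, hi⟩ := hval 0
    simpa using hi
  -- single-v configurations decide v
  have hsingle : ∀ (i : Fin n) (v : Fin r),
      f (Function.update (0 : Fin n → Fin r) i v) = v := by
    intro i v
    have h0 : f (Function.update (0 : Fin n → Fin r) i 0) = 0 := by
      have he : Function.update (0 : Fin n → Fin r) i 0 = 0 :=
        Function.update_eq_self i (0 : Fin n → Fin r)
      rw [he, hb0]
    obtain ⟨j, hj⟩ := hval (Function.update (0 : Fin n → Fin r) i v)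
    by_cases hji : j = i
    · subst hji; simpa using hj
    · rw [Function.update_of_ne hji] at hj
      have hjv : f (Function.update (0 : Fin n → Fin r) i v) = 0 := by
        simpa using hj
      have hv0 : v = 0 := (hbij i 0).injective
        (show f (Function.update (0 : Fin n → Fin r) i v)
            = f (Function.update (0 : Fin n → Fin r) i 0) by rw [hjv, h0])
      rw [hv0]; exact h0
  -- double-v configurations decide 0
  have hdouble : ∀ (i j : Fin n), i ≠ j → ∀ v : Fin r, v ≠ 0 →
      f (Function.update (Function.update (0 : Fin n → Fin r) i v) j v) = 0 := by
    intro i j hij v hv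
    set x := Function.update (Function.update (0 : Fin n → Fin r) i v) j v with hx
    have hxjv : Function.update x j v = x := by rw [hx, Function.update_idem]
    have hxj0 : f (Function.update x j 0) = v := by
      have he : Function.update x j 0 = Function.update (0 : Fin n → Fin r) i v := by
        rw [hx, Function.update_idem]
        funext m
        by_cases hm : m = j
        · subst hm
          rw [Function.update_self, Function.update_of_ne hij.symm]
          simp
        · rw [Function.update_of_ne hm]
      rw [he]; exact hsingle i v
    have hne : f x ≠ v := by
      intro h
      have : v = (0 : Fin r) := (hbij j x).injective
        (show f (Function.update x j v) = f (Function.update x j 0) by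
          rw [hxjv, h, hxj0])
      exact hv this
    obtain ⟨k, hk⟩ := hval x
    by_cases hkj : k = j
    · subst hkj
      rw [hx, Function.update_self] at hk
      exact absurd hk hne
    · by_cases hki : k = i
      · subst hki
        rw [hx, Function.update_of_ne hkj, Function.update_self] at hk
        exact absurd hk hne
      · rw [hx, Function.update_of_ne hkj, Function.update_of_ne hki] at hk
        simpa using hk
  -- the contradictory configuration
  have h3 : 3 ≤ r := hr
  set i0 : Fin n := ⟨0, by omega⟩ with hi0
  set i1 : Fin n := ⟨1, by omega⟩ with hi1
  have h01 : i0 ≠ i1 := by simp [hi0, hi1, Fin.ext_iff]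
  set u : Fin r := ⟨1, by omega⟩ with hu
  set v : Fin r := ⟨2, by omega⟩ with hv
  have hu0 : u ≠ 0 := by
    simp [hu, Fin.ext_iff]
  have hv0 : v ≠ 0 := by
    simp [hv, Fin.ext_iff]
  have huv : u ≠ v := by
    simp [hu, hv, Fin.ext_iff]
  set x := Function.update (Function.update (0 : Fin n → Fin r) i0 u) i1 v with hx
  -- alternate form of x
  have hxalt : x = Function.update (Function.update (0 : Fin n → Fin r) i1 v) i0 u := by
    rw [hx, Function.update_comm h01]
  -- varying coordinate i0
  have hg0 : f (Function.update x i0 0) = v := by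
    have he : Function.update x i0 0 = Function.update (0 : Fin n → Fin r) i1 v := by
      rw [hxalt, Function.update_idem]
      funext m
      by_cases hm : m = i0
      · subst hm
        rw [Function.update_self, Function.update_of_ne h01]
        simp
      · rw [Function.update_of_ne hm]
    rw [he]; exact hsingle i1 v
  have hgv : f (Function.update x i0 v) = 0 := by
    have he : Function.update x i0 v
        = Function.update (Function.update (0 : Fin n → Fin r) i1 v) i0 v := by
      rw [hxalt, Function.update_idem]
    rw [he]; exact hdouble i1 i0 h01.symm v hv0
  have hgu : Function.update x i0 u = x := by rw [hxalt, Function.update_idem, ← hxalt]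
  -- varying coordinate i1
  have hh0 : f (Function.update x i1 0) = u := by
    have he : Function.update x i1 0 = Function.update (0 : Fin n → Fin r) i0 u := by
      rw [hx, Function.update_idem]
      funext m
      by_cases hm : m = i1
      · subst hm
        rw [Function.update_self, Function.update_of_ne h01.symm]
        simp
      · rw [Function.update_of_ne hm]
    rw [he]; exact hsingle i0 u
  have hhv : Function.update x i1 v = x := by rw [hx, Function.update_idem]
  -- f x is none of 0, u, v
  have hne0 : f x ≠ 0 := by
    intro h
    have : u = v := (hbij i0 x).injective
      (show f (Function.update x i0 u) = f (Function.update x i0 v) by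
        rw [hgu, h, hgv])
    exact huv this
  have hnev : f x ≠ v := by
    intro h
    have : u = (0 : Fin r) := (hbij i0 x).injective
      (show f (Function.update x i0 u) = f (Function.update x i0 0) by
        rw [hgu, h, hg0])
    exact hu0 this
  have hneu : f x ≠ u := by
    intro h
    have : v = (0 : Fin r) := (hbij i1 x).injective
      (show f (Function.update x i1 v) = f (Function.update x i1 0) by
        rw [hhv, h, hh0])
    exact hv0 this
  -- but validity forces f x ∈ {0, u, v}
  obtain ⟨k, hk⟩ := hval x
  by_cases hk1 : k = i1
  · subst hk1
    rw [hx, Function.update_self] at hk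
    exact hnev hk
  · by_cases hk0 : k = i0
    · subst hk0
      rw [hx, Function.update_of_ne hk1, Function.update_self] at hk
      exact hneu hk
    · rw [hx, Function.update_of_ne hk1, Function.update_of_ne hk0] at hk
      exact hne0 (by simpa using hk)
end

section
/- Let n ≥ 1, r ≥ 2, p a probability mass function on Fin r with full support, and f : (Fin n → Fin r) → Fin r a valid function. Suppose for every coordinate i and value v, the probability under b ∼ p that f (Function.update x i b) = v is a constant c(i,v) independent of x. Then c(i,v) = p v for every i and v. -/
theorem out_in (n r : ℕ) (hn : 1 ≤ n) (hr : 2 ≤ r) [NeZero r]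
    (p : PMF (Fin r)) (hsupp : ∀ v : Fin r, p v ≠ 0)
    (f : (Fin n → Fin r) → Fin r)
    (hvalid : ∀ x : Fin n → Fin r, ∃ i : Fin n, f x = x i)
    (c : Fin n → Fin r → ENNReal)
    (hconst : ∀ (i : Fin n) (v : Fin r) (x : Fin n → Fin r),
      (∑ b : Fin r, p b * (if f (Function.update x i b) = v then 1 else 0)) = c i v) :
    ∀ (i : Fin n) (v : Fin r), c i v = p v := by
  intro i v
  -- lower bound: p w ≤ c i w for every w
  have hge : ∀ w : Fin r, p w ≤ c i w := by
    intro w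
    rw [← hconst i w (fun _ => w)]
    have hupd : Function.update (fun _ : Fin n => w) i w = fun _ => w := by
      funext j; by_cases h : j = i <;> simp [Function.update, h]
    have hfw : f (fun _ => w) = w := by
      obtain ⟨j, hj⟩ := hvalid (fun _ => w); simpa using hj
    calc (p w : ENNReal)
        = p w * (if f (Function.update (fun _ => w) i w) = w then 1 else 0) := by
          rw [hupd, hfw]; simp
      _ ≤ ∑ b : Fin r, p b * (if f (Function.update (fun _ => w) i b) = w then 1 else 0) :=
          Finset.single_le_sum (f := fun b => p b * (if f (Function.update (fun _ => w) i b) = w then 1 else 0)) (fun b _ => zero_le) (Finset.mem_univ w)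
  have hsum_p : ∑ w : Fin r, (p w : ENNReal) = 1 := by
    have := p.tsum_coe; rwa [tsum_fintype] at this
  have hsum_c : ∑ w : Fin r, c i w = 1 := by
    have x0 : Fin n → Fin r := fun _ => ⟨0, Nat.lt_of_lt_of_le Nat.zero_lt_two hr⟩
    calc ∑ w : Fin r, c i w
        = ∑ w : Fin r, ∑ b : Fin r,
            p b * (if f (Function.update x0 i b) = w then 1 else 0) := by
          refine Finset.sum_congr rfl fun w _ => (hconst i w x0).symm
      _ = ∑ b : Fin r, ∑ w : Fin r,
            p b * (if f (Function.update x0 i b) = w then 1 else 0) := Finset.sum_comm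
      _ = ∑ b : Fin r, (p b : ENNReal) := by
          refine Finset.sum_congr rfl fun b _ => ?_
          rw [← Finset.mul_sum]
          simp
      _ = 1 := hsum_p
  -- upper bound via cancellation
  have h1 : c i v + ∑ w ∈ Finset.univ.erase v, c i w = 1 := by
    rw [Finset.add_sum_erase _ _ (Finset.mem_univ v)]; exact hsum_c
  have h2 : (p v : ENNReal) + ∑ w ∈ Finset.univ.erase v, (p w : ENNReal) = 1 := by
    rw [Finset.add_sum_erase _ _ (Finset.mem_univ v)]; exact hsum_p
  have hS_ne : (∑ w ∈ Finset.univ.erase v, c i w) ≠ ⊤ := by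
    intro h
    rw [h, add_top] at h1
    exact (ENNReal.top_ne_one h1)
  have hTS : (∑ w ∈ Finset.univ.erase v, (p w : ENNReal)) ≤
      ∑ w ∈ Finset.univ.erase v, c i w :=
    Finset.sum_le_sum fun w _ => hge w
  have hle : c i v ≤ p v := by
    have : c i v + ∑ w ∈ Finset.univ.erase v, c i w ≤
        (p v : ENNReal) + ∑ w ∈ Finset.univ.erase v, c i w := by
      rw [h1, ← h2]
      exact add_le_add_right hTS _
    exact (ENNReal.add_le_add_iff_right hS_ne).mp this
  exact le_antisymm hle (hge v)
end

section
/- Let n ≥ 2, r ≥ 2, p a probability mass function on Fin r with full support, and f : (Fin n → Fin r) → Fin r a valid function such that for every coordinate i and value v, the probability under b ∼ p that f (Function.update x i b) = v is independent of x. Then p is the uniform distribution on Fin r, i.e., p v = 1/r for all v. -/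
theorem input_distribution_uniform (n r : ℕ) (hn : 2 ≤ n) (hr : 2 ≤ r) [NeZero r]
    (p : PMF (Fin r)) (hsupp : ∀ v : Fin r, p v ≠ 0)
    (f : (Fin n → Fin r) → Fin r)
    (hvalid : ∀ x : Fin n → Fin r, ∃ i : Fin n, f x = x i)
    (hres : ∀ (i : Fin n) (v : Fin r) (x y : Fin n → Fin r),
      (∑ b : Fin r, p b * (if f (Function.update x i b) = v then 1 else 0)) =
      (∑ b : Fin r, p b * (if f (Function.update y i b) = v then 1 else 0))) :
    ∀ v : Fin r, p v = 1 / (r : ENNReal) := by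
  have hfconst : ∀ v : Fin r, f (fun _ => v) = v := fun v => (hvalid (fun _ => v)).choose_spec
  have hne_top : ∀ v : Fin r, p v ≠ ⊤ :=
    fun v => (lt_of_le_of_lt (p.coe_le_one v) ENNReal.one_lt_top).ne
  -- Step 1: a lone deviator's value is output
  have step1 : ∀ (i : Fin n) (v b : Fin r), b ≠ v →
      f (Function.update (fun _ => v) i b) = b := by
    intro i v b hbv
    by_contra hcon
    have hval : f (Function.update (fun _ => v) i b) = v := by
      obtain ⟨k, hk⟩ := hvalid (Function.update (fun _ => v) i b)
      by_cases hki : k = i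
      · subst hki; rw [Function.update_self] at hk; exact absurd hk hcon
      · rw [Function.update_of_ne hki] at hk; exact hk
    obtain ⟨w, hwv⟩ : ∃ w : Fin r, w ≠ v := by
      rcases Decidable.em (v = ⟨0, by omega⟩) with h | h
      · exact ⟨⟨1, by omega⟩, by rw [h]; simp [Fin.ext_iff]⟩
      · exact ⟨⟨0, by omega⟩, fun hh => h hh.symm⟩
    have key := hres i v (fun _ => v) (fun _ => w)
    have hub : (∑ c : Fin r, p c * (if f (Function.update (fun _ => w) i c) = v then 1 else 0))
        ≤ p v := by
      calc (∑ c : Fin r, p c * (if f (Function.update (fun _ => w) i c) = v then 1 else 0))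
          ≤ ∑ c : Fin r, (if c = v then p v else 0) := by
            apply Finset.sum_le_sum
            intro c _
            by_cases hcv : c = v
            · subst hcv
              simp only [if_pos rfl]
              calc p c * (if f (Function.update (fun _ => w) i c) = c then 1 else 0)
                  ≤ p c * 1 := by gcongr; split <;> simp
                _ = p c := mul_one _
            · have hind : f (Function.update (fun _ => w) i c) ≠ v := by
                obtain ⟨k, hk⟩ := hvalid (Function.update (fun _ => w) i c)
                by_cases hki : k = i
                · subst hki; rw [Function.update_self] at hk; rw [hk]; exact hcv
                · rw [Function.update_of_ne hki] at hk; rw [hk]; exact hwv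
              simp [hind, hcv]
        _ = p v := by simp
    have hlb : p v + p b ≤
        (∑ c : Fin r, p c * (if f (Function.update (fun _ => v) i c) = v then 1 else 0)) := by
      have hsub : ({v, b} : Finset (Fin r)) ⊆ Finset.univ := Finset.subset_univ _
      have := Finset.sum_le_sum_of_subset (f := fun c =>
        p c * (if f (Function.update (fun _ => v) i c) = v then 1 else 0)) hsub
      refine le_trans (le_of_eq ?_) this
      rw [Finset.sum_pair (Ne.symm hbv)]
      have h1 : Function.update (fun _ : Fin n => v) i v = fun _ => v :=
        Function.update_eq_self i _
      rw [h1, hfconst v, hval]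
      simp
    rw [key] at hlb
    have hle : p v + p b ≤ p v + 0 := by simpa using le_trans hlb hub
    have : p b ≤ 0 := (ENNReal.add_le_add_iff_left (hne_top v)).mp hle
    exact hsupp b (le_antisymm this zero_le)
  -- Step 2: p v₁ ≤ p v₂ for v₂ ≠ v₁
  have step2 : ∀ v₁ v₂ : Fin r, v₂ ≠ v₁ → p v₁ ≤ p v₂ := by
    intro v₁ v₂ hne
    set i : Fin n := ⟨0, by omega⟩ with hi
    set j : Fin n := ⟨1, by omega⟩ with hj
    have hij : i ≠ j := by simp [hi, hj, Fin.ext_iff]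
    set x : Fin n → Fin r := Function.update (fun _ => v₁) j v₂ with hx
    have key := hres i v₂ x (fun _ => v₂)
    have hrhs : (∑ c : Fin r, p c * (if f (Function.update (fun _ => v₂) i c) = v₂ then 1 else 0))
        = p v₂ := by
      calc (∑ c : Fin r, p c * (if f (Function.update (fun _ => v₂) i c) = v₂ then 1 else 0))
          = ∑ c : Fin r, (if c = v₂ then p v₂ else 0) := by
            apply Finset.sum_congr rfl
            intro c _
            by_cases hcv : c = v₂
            · subst hcv
              have h1 : Function.update (fun _ : Fin n => c) i c = fun _ => c :=
                Function.update_eq_self i _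
              rw [h1, hfconst c]
              simp
            · rw [step1 i v₂ c hcv]
              simp [hcv]
        _ = p v₂ := by simp
    have hlhs : p v₁ ≤
        (∑ c : Fin r, p c * (if f (Function.update x i c) = v₂ then 1 else 0)) := by
      have hxi : x i = v₁ := by rw [hx]; exact Function.update_of_ne hij _ _
      have hxx : Function.update x i v₁ = x := by
        conv_lhs => rw [← hxi]
        exact Function.update_eq_self i x
      have hfx : f x = v₂ := step1 j v₁ v₂ hne
      have := Finset.single_le_sum (f := fun c =>
        p c * (if f (Function.update x i c) = v₂ then 1 else 0))
        (fun c _ => zero_le) (Finset.mem_univ v₁)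
      simpa [hxx, hfx] using this
    rw [key, hrhs] at hlhs
    exact hlhs
  have hall : ∀ v w : Fin r, p v = p w := by
    intro v w
    by_cases hvw : v = w
    · rw [hvw]
    · exact le_antisymm (step2 v w (Ne.symm hvw)) (step2 w v hvw)
  intro v
  have hsum : (∑ b : Fin r, p b) = 1 := by rw [← tsum_fintype (L := .unconditional _)]; exact p.tsum_coe
  have hmul : (r : ENNReal) * p v = 1 := by
    rw [← hsum, Finset.sum_congr rfl (fun b _ => hall b v)]
    simp [Finset.sum_const, mul_comm]
  have hr0 : (r : ENNReal) ≠ 0 := Nat.cast_ne_zero.mpr (by omega)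
  have hrt : (r : ENNReal) ≠ ⊤ := ENNReal.natCast_ne_top r
  exact (ENNReal.eq_div_iff hr0 hrt).mpr hmul
end

section
/- Let r ≥ 3, n = 2, and f : (Fin 2 → Fin r) → Fin r (viewed as f : Fin r → Fin r → Fin r). Suppose f is valid (f a b ∈ {a, b} for all a b) and f is bijective in each argument separately. Then a contradiction follows; i.e., no such f exists. -/
theorem no_two_agent_multivalued (r : ℕ) (hr : 3 ≤ r) [NeZero r]
    (f : Fin r → Fin r → Fin r)
    (hvalid : ∀ a b : Fin r, f a b = a ∨ f a b = b)
    (hbij₁ : ∀ a : Fin r, Function.Bijective (f a))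
    (hbij₂ : ∀ b : Fin r, Function.Bijective (fun a => f a b)) :
    False := by
  have h00 : f 0 0 = 0 := by rcases hvalid 0 0 with h | h <;> exact h
  set u : Fin r := ⟨1, by omega⟩ with hu
  have hu0 : u ≠ 0 := by
    intro h
    have := congrArg Fin.val h
    simp [hu] at this
  have hfu0 : f u 0 = u := by
    rcases hvalid u 0 with h | h
    · exact h
    · exact absurd ((hbij₂ 0).injective (h.trans h00.symm)) hu0
  have hfuu : f u u = u := by rcases hvalid u u with h | h <;> exact h
  exact hu0 ((hbij₁ u).injective (hfuu.trans hfu0.symm))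
end
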